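/- Let s > 1 and assume the detailed balance condition π_i a_{ij} = π_j a_{ji} for all i ≠ j. If η₁ := min_{i=1,…,n} ( a_{ii} − ((s−1)/(s+1)) Σ_{j=1, j≠i}^n a_{ij} ) > 0, then for every z ∈ ℝ^n and every u ∈ (0,∞)^n, zᵀ H(u) A(u) z ≥ s Σ_{i=1}^n π_i a_{i0} u_i^{s-2} z_i² + η₁ s(s+1) Σ_{i=1}^n π_i u_i^{2(s-1)} z_i². -/

import Mathlib

open Finset Real

noncomputable section

/-- The diffusion matrix `A(u)`: `A_{ij}(u) = δ_{ij}(a_{i0} + Σ_k a_{ik} u_k^s) + s a_{ij} u_i u_j^{s-1}`. -/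
def matA (n : ℕ) (s : ℝ) (a0 : Fin n → ℝ) (a : Fin n → Fin n → ℝ) (u : Fin n → ℝ) :
    Matrix (Fin n) (Fin n) ℝ :=
  Matrix.of fun i j =>
    (if i = j then a0 i + ∑ k, a i k * u k ^ s else 0) + s * a i j * u i * u j ^ (s - 1)

/-- The entropy Hessian `H(u)`: `H_{ij}(u) = δ_{ij} s π_i u_i^{s-2}`. -/
def matH (n : ℕ) (s : ℝ) (P : Fin n → ℝ) (u : Fin n → ℝ) : Matrix (Fin n) (Fin n) ℝ :=
  Matrix.of fun i j => if i = j then s * P i * u i ^ (s - 2) else 0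

/-- The quadratic form `zᵀ M z`. -/
def quad (n : ℕ) (M : Matrix (Fin n) (Fin n) ℝ) (z : Fin n → ℝ) : ℝ :=
  ∑ i, ∑ j, z i * M i j * z j

lemma scalar_key (s c x y : ℝ) (hs : 1 < s) (hc : 0 < c) :
    0 ≤ (c + (s-1)) * x^2 + (c⁻¹ + (s-1)) * y^2 + 2*s*x*y := by
  have h1 : c * c⁻¹ = 1 := mul_inv_cancel₀ hc.ne'
  have hic : 0 < c⁻¹ := inv_pos.mpr hc
  have h2 : 0 ≤ (c-1)^2 * c⁻¹ := by positivity
  have h3 : (c-1)^2 * c⁻¹ = c - 2 + c⁻¹ := by field_simp; ring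
  have hAB : s^2 ≤ (c + (s-1)) * (c⁻¹ + (s-1)) := by nlinarith [h2, h3, h1]
  have hA : 0 < c + (s-1) := by nlinarith
  nlinarith [sq_nonneg ((c + (s-1))*x + s*y), mul_nonneg (sub_nonneg.mpr hAB) (sq_nonneg y), hA]

lemma pair_key' (s A B C1 C2 D1 D2 zi zj : ℝ) (hs : 1 < s) (hA : 0 < A) (hB : 0 < B)
    (hCA : C1*C1 = C2*A) (hDB : D1*D1 = D2*B) :
    0 ≤ B*C2*zi^2 + A*D2*zj^2 + s*(C1*D1*zi*zj) + s*(D1*C1*zj*zi)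
      + (s-1)*(C1*C1*zi^2) + (s-1)*(D1*D1*zj^2) := by
  have key := scalar_key s (B/A) (C1*zi) (D1*zj) hs (div_pos hB hA)
  rw [inv_div] at key
  have hA' := hA.ne'
  have hB' := hB.ne'
  have e1 : (B/A) * (C1*zi)^2 = B*C2*zi^2 := by field_simp; linear_combination zi^2*hCA
  have e2 : (A/B) * (D1*zj)^2 = A*D2*zj^2 := by field_simp; linear_combination zj^2*hDB
  have hid : (B/A + (s-1))*(C1*zi)^2 + (A/B + (s-1))*(D1*zj)^2 + 2*s*(C1*zi)*(D1*zj)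
      = B*C2*zi^2 + A*D2*zj^2 + s*(C1*D1*zi*zj) + s*(D1*C1*zj*zi)
        + (s-1)*(C1*C1*zi^2) + (s-1)*(D1*D1*zj^2) := by
    linear_combination e1 + e2
  linarith [key, hid]

lemma pair_key (s ui uj zi zj : ℝ) (hs : 1 < s) (hui : 0 < ui) (huj : 0 < uj) :
    0 ≤ uj ^ s * ui ^ (s-2) * zi^2 + ui ^ s * uj ^ (s-2) * zj^2
      + s * (ui ^ (s-1) * uj ^ (s-1) * zi * zj) + s * (uj ^ (s-1) * ui ^ (s-1) * zj * zi)
      + (s-1) * (ui ^ (2*(s-1)) * zi^2) + (s-1) * (uj ^ (2*(s-1)) * zj^2) := by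
  have hCA : ui^(s-1) * ui^(s-1) = ui^(s-2) * ui^s := by
    rw [← Real.rpow_add hui, ← Real.rpow_add hui]; ring_nf
  have hDB : uj^(s-1) * uj^(s-1) = uj^(s-2) * uj^s := by
    rw [← Real.rpow_add huj, ← Real.rpow_add huj]; ring_nf
  have h2i : ui^(2*(s-1)) = ui^(s-1) * ui^(s-1) := by
    rw [← Real.rpow_add hui]; ring_nf
  have h2j : uj^(2*(s-1)) = uj^(s-1) * uj^(s-1) := by
    rw [← Real.rpow_add huj]; ring_nf
  rw [h2i, h2j]
  exact pair_key' s (ui^s) (uj^s) (ui^(s-1)) (ui^(s-2)) (uj^(s-1)) (uj^(s-2)) zi zj hs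
    (rpow_pos_of_pos hui s) (rpow_pos_of_pos huj s) hCA hDB

theorem stmt7 (n : ℕ) [NeZero n] (s : ℝ) (hs : 1 < s)
    (a0 : Fin n → ℝ) (a : Fin n → Fin n → ℝ) (P : Fin n → ℝ)
    (ha0 : ∀ i, 0 ≤ a0 i) (ha : ∀ i j, 0 ≤ a i j) (hP : ∀ i, 0 < P i)
    (hdb : ∀ i j, i ≠ j → P i * a i j = P j * a j i)
    (η1 : ℝ)
    (hη1 : η1 = Finset.univ.inf' Finset.univ_nonempty
      (fun i => a i i - (s - 1) / (s + 1) * ∑ j ∈ Finset.univ.erase i, a i j))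
    (hpos : 0 < η1) :
    ∀ (z u : Fin n → ℝ), (∀ i, 0 < u i) →
      s * ∑ i, P i * a0 i * u i ^ (s - 2) * z i ^ 2
        + η1 * (s * (s + 1)) * ∑ i, P i * u i ^ (2 * (s - 1)) * z i ^ 2
      ≤ quad n (matH n s P u * matA n s a0 a u) z := by
  intro z u hu
  have hs0 : (0:ℝ) < s := by linarith
  have hs1 : (0:ℝ) < s + 1 := by linarith
  -- abbreviations
  set g : Fin n → ℝ := fun i => P i * u i ^ (2*(s-1)) * z i ^ 2 with hgdef
  have hgnn : ∀ i, 0 ≤ g i := fun i =>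
    mul_nonneg (mul_nonneg (hP i).le (rpow_nonneg (hu i).le _)) (sq_nonneg _)
  -- rpow facts
  have hpow1 : ∀ i, u i ^ (s-2) * u i = u i ^ (s-1) := by
    intro i
    have h := (Real.rpow_add (hu i) (s-2) 1).symm
    rw [Real.rpow_one] at h
    rw [h]
    ring_nf
  have hpow2 : ∀ i, u i ^ s * u i ^ (s-2) = u i ^ (2*(s-1)) := by
    intro i
    rw [← Real.rpow_add (hu i)]; ring_nf
  have hpow3 : ∀ i, u i ^ (s-1) * u i ^ (s-1) = u i ^ (2*(s-1)) := by
    intro i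
    rw [← Real.rpow_add (hu i)]; ring_nf
  -- the three sums
  set S0 : ℝ := ∑ i, P i * a0 i * u i ^ (s-2) * z i ^ 2 with hS0
  set S1 : ℝ := ∑ i, ∑ j, P i * a i j * (u j ^ s * u i ^ (s-2) * z i ^ 2) with hS1
  set S2 : ℝ := ∑ i, ∑ j, P i * a i j * (u i ^ (s-1) * u j ^ (s-1) * z i * z j) with hS2
  -- Step 1: quad = s*S0 + s*S1 + s*s*S2
  have hquad : quad n (matH n s P u * matA n s a0 a u) z = s*S0 + s*S1 + s*s*S2 := by
    have hHA : ∀ i j, (matH n s P u * matA n s a0 a u) i j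
        = s * P i * u i ^ (s-2) *
          ((if i = j then a0 i + ∑ k, a i k * u k ^ s else 0) + s * a i j * u i * u j ^ (s - 1)) := by
      intro i j
      rw [Matrix.mul_apply, Finset.sum_eq_single i]
      · simp [matH, matA]
      · intro b _ hb
        have hz : matH n s P u i b = 0 := by
          simp only [matH, Matrix.of_apply, if_neg (fun h : i = b => hb h.symm)]
        rw [hz, zero_mul]
      · simp
    unfold quad
    rw [hS0, hS1, hS2, Finset.mul_sum, Finset.mul_sum, Finset.mul_sum,
      ← Finset.sum_add_distrib, ← Finset.sum_add_distrib]
    refine Finset.sum_congr rfl fun i _ => ?_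
    have expand : ∀ j, z i * (matH n s P u * matA n s a0 a u) i j * z j
        = (if i = j then s * P i * u i ^ (s-2) * (a0 i + ∑ k, a i k * u k ^ s) * z i * z j else 0)
          + s * s * P i * a i j * (u i ^ (s-2) * u i) * u j ^ (s-1) * z i * z j := by
      intro j
      rw [hHA i j]
      by_cases h : i = j
      · simp only [if_pos h]; ring
      · simp only [if_neg h]; ring
    rw [Finset.sum_congr rfl fun j _ => expand j, Finset.sum_add_distrib,
      Finset.sum_ite_eq Finset.univ i]
    simp only [Finset.mem_univ, if_true, hpow1 i]
    have expand2 : s * P i * u i ^ (s-2) * (a0 i + ∑ k, a i k * u k ^ s) * z i * z i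
        = s * (P i * a0 i * u i ^ (s-2) * z i ^ 2)
          + ∑ k, s * (P i * a i k * (u k ^ s * u i ^ (s-2) * z i ^ 2)) := by
      rw [mul_add, add_mul, add_mul, Finset.mul_sum, Finset.sum_mul, Finset.sum_mul]
      congr 1
      · ring
      · exact Finset.sum_congr rfl fun k _ => by ring
    rw [expand2, Finset.mul_sum, Finset.mul_sum]
    congr 1
    exact Finset.sum_congr rfl fun j _ => by ring
  rw [hquad]
  -- Step 2: split S1, S2 into diagonal and off-diagonal
  have hsplit1 : S1 = ∑ i, a i i * g i + ∑ i, ∑ j ∈ Finset.univ.erase i, P i * a i j * (u j ^ s * u i ^ (s-2) * z i ^ 2) := by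
    rw [hS1, ← Finset.sum_add_distrib]
    refine Finset.sum_congr rfl fun i _ => ?_
    rw [← Finset.add_sum_erase Finset.univ _ (Finset.mem_univ i)]
    congr 1
    simp only [hgdef]
    rw [← hpow2 i]; ring
  have hsplit2 : S2 = ∑ i, a i i * g i + ∑ i, ∑ j ∈ Finset.univ.erase i, P i * a i j * (u i ^ (s-1) * u j ^ (s-1) * z i * z j) := by
    rw [hS2, ← Finset.sum_add_distrib]
    refine Finset.sum_congr rfl fun i _ => ?_
    rw [← Finset.add_sum_erase Finset.univ _ (Finset.mem_univ i)]
    congr 1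
    simp only [hgdef]
    rw [← hpow3 i]; ring
  -- Step 3: off-diagonal lower bound
  set f : Fin n → Fin n → ℝ := fun i j =>
    P i * a i j * (u j ^ s * u i ^ (s-2) * z i ^ 2)
    + s * (P i * a i j * (u i ^ (s-1) * u j ^ (s-1) * z i * z j))
    + (s-1) * (a i j * g i) with hfdef
  have hfsum : 0 ≤ ∑ i, ∑ j ∈ Finset.univ.erase i, f i j := by
    have hswap : ∑ i, ∑ j ∈ Finset.univ.erase i, f i j
        = ∑ i, ∑ j ∈ Finset.univ.erase i, f j i := by
      rw [Finset.sum_comm' (s' := fun j => Finset.univ.erase j) (t' := Finset.univ)]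
      intro x y
      simp [Finset.mem_erase, eq_comm, and_comm]
    have h2 : 0 ≤ ∑ i, ∑ j ∈ Finset.univ.erase i, (f i j + f j i) := by
      refine Finset.sum_nonneg fun i _ => Finset.sum_nonneg fun j hj => ?_
      have hij : j ≠ i := (Finset.mem_erase.mp hj).1
      have hb : P j * a j i = P i * a i j := hdb j i hij
      have hkey := pair_key s (u i) (u j) (z i) (z j) hs (hu i) (hu j)
      have hbnn : 0 ≤ P i * a i j := mul_nonneg (hP i).le (ha i j)
      have : f i j + f j i = (P i * a i j) *
          (u j ^ s * u i ^ (s-2) * z i ^ 2 + u i ^ s * u j ^ (s-2) * z j ^ 2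
          + s * (u i ^ (s-1) * u j ^ (s-1) * z i * z j) + s * (u j ^ (s-1) * u i ^ (s-1) * z j * z i)
          + (s-1) * (u i ^ (2*(s-1)) * z i ^ 2) + (s-1) * (u j ^ (2*(s-1)) * z j ^ 2)) := by
        simp only [hfdef, hgdef]
        linear_combination (u i ^ s * u j ^ (s-2) * z j ^ 2 + s * (u j ^ (s-1) * u i ^ (s-1) * z j * z i)
          + (s-1) * (u j ^ (2*(s-1)) * z j ^ 2)) * hb
      rw [this]
      exact mul_nonneg hbnn hkey
    have h3 : ∑ i, ∑ j ∈ Finset.univ.erase i, (f i j + f j i)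
        = (∑ i, ∑ j ∈ Finset.univ.erase i, f i j)
          + ∑ i, ∑ j ∈ Finset.univ.erase i, f j i := by
      rw [← Finset.sum_add_distrib]
      exact Finset.sum_congr rfl fun i _ => Finset.sum_add_distrib
    rw [h3, ← hswap] at h2
    linarith
  -- Step 4: eta bound per i
  have heta : ∀ i, η1 * (s+1) * g i ≤ (s+1) * (a i i * g i)
      - (s-1) * ((∑ j ∈ Finset.univ.erase i, a i j) * g i) := by
    intro i
    have hle : η1 ≤ a i i - (s-1)/(s+1) * ∑ j ∈ Finset.univ.erase i, a i j := by
      rw [hη1]; exact Finset.inf'_le _ (Finset.mem_univ i)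
    have h1 : η1 * (s+1) ≤ (a i i - (s-1)/(s+1) * ∑ j ∈ Finset.univ.erase i, a i j) * (s+1) :=
      mul_le_mul_of_nonneg_right hle hs1.le
    have h2 : (a i i - (s-1)/(s+1) * ∑ j ∈ Finset.univ.erase i, a i j) * (s+1)
        = (s+1) * a i i - (s-1) * ∑ j ∈ Finset.univ.erase i, a i j := by
      field_simp
    rw [h2] at h1
    calc η1 * (s+1) * g i = η1 * (s+1) * g i := rfl
      _ ≤ ((s+1) * a i i - (s-1) * ∑ j ∈ Finset.univ.erase i, a i j) * g i :=
          mul_le_mul_of_nonneg_right h1 (hgnn i)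
      _ = (s+1) * (a i i * g i) - (s-1) * ((∑ j ∈ Finset.univ.erase i, a i j) * g i) := by ring
  -- combine
  have hsum_eta : η1 * (s+1) * ∑ i, g i ≤ (s+1) * ∑ i, a i i * g i
      - (s-1) * ∑ i, (∑ j ∈ Finset.univ.erase i, a i j) * g i := by
    have := Finset.sum_le_sum (fun i (_ : i ∈ Finset.univ) => heta i)
    rw [Finset.mul_sum]
    calc ∑ i, η1 * (s+1) * g i
        ≤ ∑ i, ((s+1) * (a i i * g i) - (s-1) * ((∑ j ∈ Finset.univ.erase i, a i j) * g i)) := this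
      _ = (s+1) * ∑ i, a i i * g i - (s-1) * ∑ i, (∑ j ∈ Finset.univ.erase i, a i j) * g i := by
          rw [Finset.sum_sub_distrib, Finset.mul_sum, Finset.mul_sum]
  -- off-diagonal sums relation:
  have hoff : ∑ i, ∑ j ∈ Finset.univ.erase i, f i j
      = (∑ i, ∑ j ∈ Finset.univ.erase i, P i * a i j * (u j ^ s * u i ^ (s-2) * z i ^ 2))
        + s * (∑ i, ∑ j ∈ Finset.univ.erase i, P i * a i j * (u i ^ (s-1) * u j ^ (s-1) * z i * z j))
        + (s-1) * ∑ i, (∑ j ∈ Finset.univ.erase i, a i j) * g i := by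
    rw [Finset.mul_sum, Finset.mul_sum, ← Finset.sum_add_distrib, ← Finset.sum_add_distrib]
    refine Finset.sum_congr rfl fun i _ => ?_
    simp only [hfdef, Finset.sum_add_distrib, Finset.mul_sum, Finset.sum_mul]
  -- final arithmetic
  have key : η1 * (s+1) * ∑ i, g i ≤ S1 + s * S2 := by
    rw [hsplit1, hsplit2]
    have h0 := hfsum
    rw [hoff] at h0
    linarith [h0, hsum_eta]
  calc s * S0 + η1 * (s * (s + 1)) * ∑ i, g i
      = s * S0 + s * (η1 * (s+1) * ∑ i, g i) := by ring
    _ ≤ s * S0 + s * (S1 + s * S2) := by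
        have := mul_le_mul_of_nonneg_left key hs0.le
        linarith
    _ = s*S0 + s*S1 + s*s*S2 := by ring
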